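/- Let Φ ≢ 0 be a Bernstein function and define Φ*(s) = s/Φ(s) for s > 0 (extended by continuity at 0). If Φ* is also a Bernstein function (symmetry case), then the perpetuity associated to Φ has the same law as the remainder associated to Φ*, and the remainder associated to Φ has the same law as the perpetuity associated to Φ*. -/

import Mathlib

open MeasureTheory Real Set Filter

/-- A Bernstein function, null at 0: `Φ s = a s + ∫ (1 - exp (-s x)) λ(dx)`
with `a ≥ 0` and `λ` a measure on `(0,∞)` with `∫ (x ∧ 1) λ(dx) < ∞`. -/
def IsBernstein (Φ : ℝ → ℝ) : Prop :=
  ∃ (a : ℝ) (lam : Measure ℝ), 0 ≤ a ∧ lam (Iic 0) = 0 ∧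
    (∫⁻ x, ENNReal.ofReal (min x 1) ∂lam) < ⊤ ∧
    ∀ s ≥ (0 : ℝ), Φ s = a * s + ∫ x, (1 - Real.exp (-s * x)) ∂lam

/-- A subordinator (increasing Lévy process started at 0) with
Laplace–Bernstein exponent `Φ`: stationary independent increments and
`E[exp (-s ξ_l)] = exp (-l Φ(s))`. -/
structure IsSubordinator {Ω : Type*} [MeasurableSpace Ω] (P : Measure Ω)
    (ξ : ℝ → Ω → ℝ) (Φ : ℝ → ℝ) : Prop where
  isProb : IsProbabilityMeasure P
  meas : ∀ l, Measurable (ξ l)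
  zero : ∀ᵐ ω ∂P, ξ 0 ω = 0
  mono : ∀ᵐ ω ∂P, MonotoneOn (fun l => ξ l ω) (Ici 0)
  indep : ∀ (n : ℕ) (t : Fin (n + 1) → ℝ), (∀ i, 0 ≤ t i) → Monotone t →
    ProbabilityTheory.iIndepFun
      (fun i : Fin n => fun ω => ξ (t i.succ) ω - ξ (t i.castSucc) ω) P
  laplace : ∀ t ≥ (0 : ℝ), ∀ l ≥ (0 : ℝ), ∀ s ≥ (0 : ℝ),
    ∫ ω, Real.exp (-s * (ξ (t + l) ω - ξ t ω)) ∂P = Real.exp (-l * Φ s)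

/-- The perpetuity `I = ∫₀^∞ exp (-ξ_l) dl` of a subordinator. -/
noncomputable def perpetuity {Ω : Type*} (ξ : ℝ → Ω → ℝ) (ω : Ω) : ℝ :=
  ∫ l in Ioi (0 : ℝ), Real.exp (-ξ l ω)

/-- The Mellin transform `r ↦ E[X^(r-1)]` of a positive random variable. -/
noncomputable def mellinT {Ω : Type*} [MeasurableSpace Ω] (P : Measure Ω)
    (X : Ω → ℝ) (r : ℝ) : ℝ := ∫ ω, X ω ^ (r - 1) ∂P


section SymmetryAux

open scoped Topology


private lemma expRem_bound (n : ℕ) : ∀ t : ℝ, 0 ≤ t →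
    0 ≤ (-1)^n * (Real.exp (-t) - ∑ k ∈ Finset.range n, (-t)^k / k.factorial) ∧
    (-1)^n * (Real.exp (-t) - ∑ k ∈ Finset.range n, (-t)^k / k.factorial)
      ≤ t^n / n.factorial := by
  induction n with
  | zero =>
    intro t ht
    simp only [pow_zero, one_mul, Finset.range_zero, Finset.sum_empty, sub_zero,
      Nat.factorial_zero, Nat.cast_one]
    constructor
    · positivity
    · rw [div_one]
      exact Real.exp_le_one_iff.2 (by linarith)
  | succ n ih =>
    intro t ht
    -- E m s := exp(-s) - partial sum
    set E : ℕ → ℝ → ℝ := fun m s => Real.exp (-s) - ∑ k ∈ Finset.range m, (-s)^k / k.factorial with hE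
    have hderiv : ∀ s : ℝ, HasDerivAt (E (n+1)) (-(E n s)) s := by
      intro s
      have h1 : HasDerivAt (fun s : ℝ => Real.exp (-s)) (-Real.exp (-s)) s := by
        simpa using ((hasDerivAt_id s).neg.exp)
      have h2 : HasDerivAt (fun s : ℝ => ∑ k ∈ Finset.range (n+1), (-s)^k / k.factorial)
          (∑ k ∈ Finset.range (n+1), (k : ℝ) * (-s)^(k-1) * (-1) / k.factorial) s := by
        apply HasDerivAt.fun_sum
        intro k _
        have hneg : HasDerivAt (fun s : ℝ => -s) (-1) s := (hasDerivAt_id s).neg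
        have hp : HasDerivAt (fun y : ℝ => y^k) ((k:ℝ) * (-s)^(k-1)) (-s) := hasDerivAt_pow k (-s)
        exact (hp.comp s hneg).div_const _
      have hsum : (∑ k ∈ Finset.range (n+1), (k : ℝ) * (-s)^(k-1) * (-1) / k.factorial)
          = -∑ j ∈ Finset.range n, (-s)^j / j.factorial := by
        rw [Finset.sum_range_succ']
        simp only [Nat.cast_zero, zero_mul, Nat.factorial_zero, Nat.cast_one, zero_div, add_zero,
          Nat.add_sub_cancel]
        rw [← Finset.sum_neg_distrib]
        apply Finset.sum_congr rfl
        intro j _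
        rw [Nat.factorial_succ]
        push_cast
        have hj : ((j.factorial : ℝ)) ≠ 0 := by positivity
        field_simp
      have h3 := h1.sub h2
      rw [hsum] at h3
      convert h3 using 1
      · rfl
      · rfl
      · rfl
      · simp only [hE]
        ring
    have hE0 : E (n+1) 0 = 0 := by
      simp only [hE, neg_zero, Real.exp_zero]
      rw [Finset.sum_range_succ']
      simp
    have hcont : ∀ m, Continuous (E m) := by
      intro m
      apply Continuous.sub
      · exact Real.continuous_exp.comp continuous_neg
      · continuity
    have hftc : E (n+1) t = ∫ u in (0:ℝ)..t, -(E n u) := by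
      rw [intervalIntegral.integral_eq_sub_of_hasDerivAt (fun u _ => hderiv u)
        (((hcont n).neg).intervalIntegrable 0 t), hE0, sub_zero]
    have key : (-1)^(n+1) * E (n+1) t = ∫ u in (0:ℝ)..t, (-1)^n * (E n u) := by
      rw [hftc, ← intervalIntegral.integral_const_mul]
      congr 1
      ext u
      ring
    have hint1 : IntervalIntegrable (fun u => (-1:ℝ)^n * (E n u)) MeasureTheory.volume 0 t :=
      ((continuous_const.mul (hcont n)).intervalIntegrable 0 t)
    constructor
    · rw [key]
      apply intervalIntegral.integral_nonneg ht
      intro u hu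
      exact (ih u hu.1).1
    · rw [key]
      have hle : (∫ u in (0:ℝ)..t, (-1)^n * (E n u)) ≤ ∫ u in (0:ℝ)..t, u^n / n.factorial := by
        apply intervalIntegral.integral_mono_on ht hint1
        · exact ((continuous_pow n).div_const _).intervalIntegrable 0 t
        · intro u hu
          exact (ih u hu.1).2
      have hval : (∫ u in (0:ℝ)..t, u^n / n.factorial) = t^(n+1) / (n+1).factorial := by
        rw [intervalIntegral.integral_div, integral_pow]
        rw [Nat.factorial_succ]
        push_cast
        have h1 : (0:ℝ) < (n:ℝ) + 1 := by positivity
        have h2 : (0:ℝ) < (n.factorial:ℝ) := by positivity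
        field_simp
        simp
      calc _ ≤ _ := hle
        _ = _ := hval

private lemma expRem_abs (n : ℕ) {t : ℝ} (ht : 0 ≤ t) :
    |Real.exp (-t) - ∑ k ∈ Finset.range n, (-t)^k / k.factorial| ≤ t^n / n.factorial := by
  obtain ⟨h1, h2⟩ := expRem_bound n t ht
  have hnn : (0:ℝ) ≤ t^n / n.factorial := by positivity
  rcases Nat.even_or_odd n with he | ho
  · rw [he.neg_one_pow, one_mul] at h1 h2
    rw [abs_le]
    exact ⟨by linarith, h2⟩
  · rw [ho.neg_one_pow, neg_one_mul] at h1 h2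
    rw [abs_le]
    constructor <;> linarith

private lemma ae_pos_of_meas {lam : Measure ℝ} (h0 : lam (Iic 0) = 0) : ∀ᵐ x ∂lam, 0 < x := by
  have h : {x : ℝ | ¬ 0 < x} = Iic 0 := by ext x; simp [not_lt]
  rw [ae_iff, h]; exact h0

private lemma integrable_min_one {lam : Measure ℝ} (h0 : lam (Iic 0) = 0)
    (hfin : (∫⁻ x, ENNReal.ofReal (min x 1) ∂lam) < ⊤) :
    Integrable (fun x => min x 1) lam := by
  have hm : Measurable fun x : ℝ => min x 1 := measurable_id.min measurable_const
  refine ⟨hm.aestronglyMeasurable, ?_⟩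
  rw [hasFiniteIntegral_iff_norm]
  have : (∫⁻ x, ENNReal.ofReal ‖min x 1‖ ∂lam) = ∫⁻ x, ENNReal.ofReal (min x 1) ∂lam := by
    apply lintegral_congr_ae
    filter_upwards [ae_pos_of_meas h0] with x hx
    rw [Real.norm_eq_abs, abs_of_nonneg (le_min hx.le zero_le_one)]
  rw [this]; exact hfin

private lemma lam_eq_zero_core {lam : Measure ℝ} (h0 : lam (Iic 0) = 0)
    (hfin : (∫⁻ x, ENNReal.ofReal (min x 1) ∂lam) < ⊤) {g : ℝ → ℝ} (hgm : Measurable g)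
    (hgpos : ∀ x, 0 < x → 0 < g x) {C : ℝ}
    (hgle : ∀ x, 0 < x → g x ≤ C * min x 1)
    (hint : ∫ x, g x ∂lam = 0) : lam = 0 := by
  have hae := ae_pos_of_meas h0
  have hInt : Integrable g lam := by
    refine Integrable.mono' ((integrable_min_one h0 hfin).const_mul C) hgm.aestronglyMeasurable ?_
    filter_upwards [hae] with x hx
    rw [Real.norm_eq_abs, abs_of_nonneg (hgpos x hx).le]
    exact hgle x hx
  have hnn : 0 ≤ᵐ[lam] g := hae.mono fun x hx => (hgpos x hx).le
  have h := (integral_eq_zero_iff_of_nonneg_ae hnn hInt).1 hint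
  have hfalse : ∀ᵐ x ∂lam, False := by
    filter_upwards [hae, h] with x hx hx0
    exact absurd hx0 (ne_of_gt (hgpos x hx))
  rw [ae_iff] at hfalse
  simp only [not_false_eq_true, setOf_true] at hfalse
  exact Measure.measure_univ_eq_zero.mp hfalse

private lemma integrable_bern {lam : Measure ℝ} (h0 : lam (Iic 0) = 0)
    (hfin : (∫⁻ x, ENNReal.ofReal (min x 1) ∂lam) < ⊤) {s : ℝ} (hs : 0 ≤ s) :
    Integrable (fun x => 1 - Real.exp (-s * x)) lam := by
  refine Integrable.mono' ((integrable_min_one h0 hfin).const_mul (max s 1))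
    ((by fun_prop : Measurable fun x : ℝ => 1 - Real.exp (-s * x)).aestronglyMeasurable) ?_
  filter_upwards [ae_pos_of_meas h0] with x hx
  have he1 : Real.exp (-s * x) ≤ 1 := Real.exp_le_one_iff.2 (by nlinarith)
  have he0 : 0 < Real.exp (-s * x) := Real.exp_pos _
  rw [Real.norm_eq_abs, abs_of_nonneg (by linarith)]
  rcases le_or_gt x 1 with hx1 | hx1
  · rw [min_eq_left hx1]
    have := Real.add_one_le_exp (-s * x)
    have hsle : s ≤ max s 1 := le_max_left _ _
    nlinarith
  · rw [min_eq_right hx1.le]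
    have : (1:ℝ) ≤ max s 1 := le_max_right _ _
    nlinarith

private lemma bern_nonneg {Ψ : ℝ → ℝ} (hΨ : IsBernstein Ψ) {s : ℝ} (hs : 0 ≤ s) :
    0 ≤ Ψ s := by
  obtain ⟨a, lam, ha, h0, hfin, hrep⟩ := hΨ
  rw [hrep s hs]
  have h1 : 0 ≤ ∫ x, (1 - Real.exp (-s * x)) ∂lam := by
    apply integral_nonneg_of_ae
    filter_upwards [ae_pos_of_meas h0] with x hx
    simp only [Pi.zero_apply]
    have : Real.exp (-s * x) ≤ 1 := Real.exp_le_one_iff.2 (by nlinarith)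
    linarith
  nlinarith

private lemma bern_pos {Ψ : ℝ → ℝ} (hΨ : IsBernstein Ψ) (hne : ∃ s > (0:ℝ), Ψ s ≠ 0)
    {r : ℝ} (hr : 0 < r) : 0 < Ψ r := by
  rcases (bern_nonneg hΨ hr.le).lt_or_eq with h | h
  · exact h
  exfalso
  obtain ⟨a, lam, ha, h0, hfin, hrep⟩ := hΨ
  obtain ⟨s, hs, hsne⟩ := hne
  have hrep_r := hrep r hr.le
  rw [← h] at hrep_r
  have hint_nonneg : 0 ≤ ∫ x, (1 - Real.exp (-r * x)) ∂lam := by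
    apply integral_nonneg_of_ae
    filter_upwards [ae_pos_of_meas h0] with x hx
    simp only [Pi.zero_apply]
    have : Real.exp (-r * x) ≤ 1 := Real.exp_le_one_iff.2 (by nlinarith)
    linarith
  have hanonneg : 0 ≤ a * r := mul_nonneg ha hr.le
  have hint0 : ∫ x, (1 - Real.exp (-r * x)) ∂lam = 0 := by linarith
  have ha0 : a = 0 := by
    have : a * r = 0 := by linarith
    exact (mul_eq_zero.1 this).resolve_right (ne_of_gt hr)
  have hlam : lam = 0 := by
    refine lam_eq_zero_core h0 hfin
      (g := fun x => 1 - Real.exp (-r * x))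
      (by fun_prop)
      (fun x hx => ?_) (C := max r 1) (fun x hx => ?_) hint0
    · beta_reduce
      have : Real.exp (-r * x) < 1 := by
        rw [Real.exp_lt_one_iff]; nlinarith
      linarith
    · beta_reduce
      have he0 : 0 < Real.exp (-r * x) := Real.exp_pos _
      rcases le_or_gt x 1 with hx1 | hx1
      · rw [min_eq_left hx1]
        have := Real.add_one_le_exp (-r * x)
        have hsle : r ≤ max r 1 := le_max_left _ _
        nlinarith
      · rw [min_eq_right hx1.le]
        have : (1:ℝ) ≤ max r 1 := le_max_right _ _
        nlinarith
  apply hsne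
  rw [hrep s hs.le, hlam, ha0]
  simp

private lemma bern_lin {Ψ : ℝ → ℝ} (hΨ : IsBernstein Ψ) :
    ∃ C : ℝ, 0 < C ∧ ∀ s : ℝ, 1 ≤ s → Ψ s ≤ C * s := by
  obtain ⟨a, lam, ha, h0, hfin, hrep⟩ := hΨ
  set I := ∫ x, min x 1 ∂lam with hI
  have hInn : 0 ≤ I := integral_nonneg_of_ae
    ((ae_pos_of_meas h0).mono fun x hx => le_min hx.le zero_le_one)
  refine ⟨a + I + 1, by positivity, fun s hs => ?_⟩
  have hs0 : (0:ℝ) ≤ s := by linarith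
  rw [hrep s hs0]
  have h2 : ∫ x, (1 - Real.exp (-s * x)) ∂lam ≤ ∫ x, s * min x 1 ∂lam := by
    apply integral_mono_ae (integrable_bern h0 hfin hs0)
      ((integrable_min_one h0 hfin).const_mul s)
    filter_upwards [ae_pos_of_meas h0] with x hx
    have he0 : 0 < Real.exp (-s * x) := Real.exp_pos _
    rcases le_or_gt x 1 with hx1 | hx1
    · rw [min_eq_left hx1]
      have := Real.add_one_le_exp (-s * x)
      nlinarith
    · rw [min_eq_right hx1.le]
      nlinarith
  rw [MeasureTheory.integral_const_mul] at h2
  nlinarith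

private lemma mellin_int_values {m c : ℝ → ℝ} (hm1 : m 1 = 1)
    (hrec : ∀ r > (0:ℝ), m (r+1) = c r * m r) :
    ∀ n : ℕ, m (n+1) = ∏ k ∈ Finset.range n, c (k+1) := by
  intro n
  induction n with
  | zero => simpa using hm1
  | succ n ih =>
    have hpos : ((n:ℝ)+1) > 0 := by positivity
    rw [Finset.prod_range_succ, ← ih]
    push_cast
    rw [show ((n:ℝ)+1+1) = ((n:ℝ)+1)+1 by ring, hrec _ hpos]
    ring

private lemma exp_neg_integrable {Ω : Type*} [MeasurableSpace Ω] (P : Measure Ω)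
    [IsProbabilityMeasure P] {X : Ω → ℝ} (hXm : Measurable X)
    (hXpos : ∀ᵐ ω ∂P, 0 < X ω) {s : ℝ} (hs : 0 ≤ s) :
    Integrable (fun ω => Real.exp (-s * X ω)) P := by
  refine Integrable.mono' (integrable_const 1)
    ((by fun_prop : Measurable fun ω => Real.exp (-s * X ω)).aestronglyMeasurable) ?_
  filter_upwards [hXpos] with ω hω
  rw [Real.norm_eq_abs, abs_of_pos (Real.exp_pos _)]
  exact Real.exp_le_one_iff.2 (by nlinarith)

private lemma laplace_partial_bound {Ω : Type*} [MeasurableSpace Ω] (P : Measure Ω)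
    [IsProbabilityMeasure P] {X : Ω → ℝ} (hXm : Measurable X)
    (hXpos : ∀ᵐ ω ∂P, 0 < X ω)
    (hXint : ∀ n : ℕ, Integrable (fun ω => X ω ^ n) P) {s : ℝ} (hs : 0 ≤ s) (n : ℕ) :
    |(∫ ω, Real.exp (-s * X ω) ∂P)
        - ∑ k ∈ Finset.range n, (-s)^k * (∫ ω, X ω ^ k ∂P) / k.factorial|
      ≤ s^n * (∫ ω, X ω ^ n ∂P) / n.factorial := by
  have hterm : ∀ k : ℕ, Integrable (fun ω => (-s)^k * X ω ^ k / k.factorial) P :=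
    fun k => ((hXint k).const_mul _).div_const _
  have hsum_int : Integrable (fun ω => ∑ k ∈ Finset.range n, (-s)^k * X ω ^ k / k.factorial) P :=
    integrable_finset_sum _ fun k _ => hterm k
  have hL : (∫ ω, Real.exp (-s * X ω) ∂P)
        - ∑ k ∈ Finset.range n, (-s)^k * (∫ ω, X ω ^ k ∂P) / k.factorial
      = ∫ ω, (Real.exp (-s * X ω)
          - ∑ k ∈ Finset.range n, (-s)^k * X ω ^ k / k.factorial) ∂P := by
    rw [integral_sub (exp_neg_integrable P hXm hXpos hs) hsum_int,
      integral_finset_sum _ (fun k _ => hterm k)]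
    congr 1
    apply Finset.sum_congr rfl
    intro k _
    rw [integral_div, MeasureTheory.integral_const_mul]
  rw [hL]
  have hbb := norm_integral_le_of_norm_le (μ := P)
    (f := fun ω => Real.exp (-s * X ω) - ∑ k ∈ Finset.range n, (-s)^k * X ω ^ k / k.factorial)
    (g := fun ω => s^n * X ω ^ n / n.factorial)
    (((hXint n).const_mul (s^n)).div_const _) ?_
  · rw [Real.norm_eq_abs] at hbb
    calc |∫ ω, (Real.exp (-s * X ω)
          - ∑ k ∈ Finset.range n, (-s)^k * X ω ^ k / k.factorial) ∂P|
        ≤ ∫ ω, s^n * X ω ^ n / n.factorial ∂P := hbb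
      _ = s^n * (∫ ω, X ω ^ n ∂P) / n.factorial := by
          rw [integral_div, MeasureTheory.integral_const_mul]
  · filter_upwards [hXpos] with ω hω
    have ht : 0 ≤ s * X ω := mul_nonneg hs hω.le
    have hbd := expRem_abs n ht
    rw [Real.norm_eq_abs]
    have e1 : Real.exp (-s * X ω) = Real.exp (-(s * X ω)) := by ring_nf
    have e2 : ∀ k : ℕ, (-s)^k * X ω ^ k / k.factorial = (-(s * X ω))^k / k.factorial := by
      intro k
      rw [show (-(s * X ω)) = (-s) * X ω by ring, mul_pow]
    calc |Real.exp (-s * X ω) - ∑ k ∈ Finset.range n, (-s)^k * X ω ^ k / k.factorial|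
        = |Real.exp (-(s * X ω)) - ∑ k ∈ Finset.range n, (-(s * X ω))^k / k.factorial| := by
          rw [e1]
          congr 2
          exact Finset.sum_congr rfl fun k _ => e2 k
      _ ≤ (s * X ω)^n / n.factorial := hbd
      _ = s^n * X ω ^ n / n.factorial := by rw [mul_pow]

private lemma laplace_analyticOnNhd {Ω : Type*} [MeasurableSpace Ω] (P : Measure Ω)
    [IsProbabilityMeasure P] {X : Ω → ℝ} (hXm : Measurable X) (hXpos : ∀ᵐ ω ∂P, 0 < X ω) :
    AnalyticOnNhd ℂ (fun z => ∫ ω, Complex.exp (-z * (X ω : ℂ)) ∂P) {z : ℂ | 0 < z.re} := by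
  apply DifferentiableOn.analyticOnNhd ?_ (isOpen_lt continuous_const Complex.continuous_re)
  intro z0 hz0
  apply DifferentiableAt.differentiableWithinAt
  have hz0' : 0 < z0.re := hz0
  set δ : ℝ := z0.re / 2 with hδ
  have hδpos : 0 < δ := by positivity
  have hmeas : ∀ z : ℂ, AEStronglyMeasurable (fun ω => Complex.exp (-z * (X ω : ℂ))) P := by
    intro z
    exact (Complex.measurable_exp.comp
      ((Complex.measurable_ofReal.comp hXm).const_mul (-z))).aestronglyMeasurable
  have key := hasDerivAt_integral_of_dominated_loc_of_deriv_le (μ := P)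
    (F := fun (z : ℂ) ω => Complex.exp (-z * (X ω : ℂ)))
    (F' := fun (z : ℂ) ω => (-(X ω : ℂ)) * Complex.exp (-z * (X ω : ℂ)))
    (x₀ := z0) (s := Metric.ball z0 δ) (bound := fun _ => 1 / δ) (Metric.ball_mem_nhds z0 hδpos)
    (Eventually.of_forall hmeas) ?_ ?_ ?_ ?_ ?_
  · exact key.2.differentiableAt
  · -- Integrable (F z0)
    refine Integrable.mono' (integrable_const 1) (hmeas z0) ?_
    filter_upwards [hXpos] with ω hω
    rw [Complex.norm_exp]
    have hre : (-z0 * (X ω : ℂ)).re = -z0.re * X ω := by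
      simp [Complex.mul_re]
    rw [hre]
    exact Real.exp_le_one_iff.2 (by nlinarith)
  · -- AEStronglyMeasurable F' z0
    exact ((Complex.measurable_ofReal.comp hXm).neg.mul
      (Complex.measurable_exp.comp
        ((Complex.measurable_ofReal.comp hXm).const_mul (-z0)))).aestronglyMeasurable
  · -- bound
    filter_upwards [hXpos] with ω hω
    intro z hz
    have hzre : δ ≤ z.re := by
      have h2 : ‖z0 - z‖ < δ := by
        rw [Metric.mem_ball, Complex.dist_eq] at hz
        calc ‖z0 - z‖ = ‖z - z0‖ := norm_sub_rev z0 z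
          _ < δ := hz
      have h1 : |(z0 - z).re| ≤ ‖z0 - z‖ := Complex.abs_re_le_norm _
      have h3 : z0.re - z.re ≤ |(z0 - z).re| := by
        rw [Complex.sub_re]; exact le_abs_self _
      have h4 : z0.re - z.re < δ := lt_of_le_of_lt (h3.trans h1) h2
      simp only [hδ] at h4 ⊢
      linarith
    rw [norm_mul, Complex.norm_exp, norm_neg,
      Complex.norm_real, Real.norm_eq_abs, abs_of_pos hω]
    have hre : (-z * (X ω : ℂ)).re = -z.re * X ω := by simp [Complex.mul_re]
    rw [hre]
    have h4 : Real.exp (-z.re * X ω) ≤ Real.exp (-δ * X ω) := by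
      apply Real.exp_le_exp.2
      nlinarith
    have h5 : δ * X ω ≤ Real.exp (δ * X ω) := by
      have := Real.add_one_le_exp (δ * X ω)
      linarith
    have h6 : Real.exp (-δ * X ω) = (Real.exp (δ * X ω))⁻¹ := by
      rw [← Real.exp_neg]; ring_nf
    have hepos : 0 < Real.exp (δ * X ω) := Real.exp_pos _
    calc X ω * Real.exp (-z.re * X ω) ≤ X ω * (Real.exp (δ * X ω))⁻¹ := by
          rw [← h6]; exact mul_le_mul_of_nonneg_left h4 hω.le
      _ ≤ 1/δ := by
          have he : X ω * (Real.exp (δ * X ω))⁻¹ * δ = (δ * X ω) / Real.exp (δ * X ω) := by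
            field_simp
          rw [le_div_iff₀ hδpos, he, div_le_one hepos]
          exact h5
  · exact integrable_const _
  · -- differentiability
    filter_upwards [] with ω
    intro z hz
    have h1 : HasDerivAt (fun z : ℂ => -z * (X ω : ℂ)) (-(X ω : ℂ)) z := by
      simpa using ((hasDerivAt_id z).neg.mul_const ((X ω : ℂ)))
    have := h1.cexp
    simpa [mul_comm] using this

private theorem map_eq_of_moments {Ω : Type*} [MeasurableSpace Ω] {Ω' : Type*} [MeasurableSpace Ω']
    (P : Measure Ω) (Q : Measure Ω') [IsProbabilityMeasure P] [IsProbabilityMeasure Q]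
    {X : Ω → ℝ} {Y : Ω' → ℝ} (hXm : Measurable X) (hYm : Measurable Y)
    (hXpos : ∀ᵐ ω ∂P, 0 < X ω) (hYpos : ∀ᵐ ω ∂Q, 0 < Y ω)
    (μ : ℕ → ℝ) (C : ℝ) (hC : 0 < C)
    (hXint : ∀ n : ℕ, Integrable (fun ω => X ω ^ n) P)
    (hYint : ∀ n : ℕ, Integrable (fun ω' => Y ω' ^ n) Q)
    (hXmom : ∀ n : ℕ, ∫ ω, X ω ^ n ∂P = μ n)
    (hYmom : ∀ n : ℕ, ∫ ω', Y ω' ^ n ∂Q = μ n)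
    (hbd : ∀ n : ℕ, μ n ≤ n.factorial * C ^ n) :
    Measure.map X P = Measure.map Y Q := by
  have hμnn : ∀ n, 0 ≤ μ n := fun n => by
    rw [← hXmom n]
    apply integral_nonneg_of_ae
    filter_upwards [hXpos] with ω hω
    positivity
  -- Step 1 : Laplace transforms agree for small positive s
  have hsmall : ∀ s : ℝ, 0 < s → s * C < 1 →
      (∫ ω, Real.exp (-s * X ω) ∂P) = ∫ ω', Real.exp (-s * Y ω') ∂Q := by
    intro s hs hsC
    set dd := (∫ ω, Real.exp (-s * X ω) ∂P) - ∫ ω', Real.exp (-s * Y ω') ∂Q with hdd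
    have hstep : ∀ n : ℕ, |dd| ≤ 2 * (s*C)^n := by
      intro n
      have bX := laplace_partial_bound P hXm hXpos hXint hs.le n
      have bY := laplace_partial_bound Q hYm hYpos hYint hs.le n
      simp only [hXmom] at bX
      simp only [hYmom] at bY
      have hub : s^n * μ n / n.factorial ≤ (s*C)^n := by
        have h2 : (0:ℝ) < (n.factorial : ℝ) := by positivity
        rw [div_le_iff₀ h2, mul_pow]
        calc s^n * μ n ≤ s^n * (n.factorial * C^n) := by
              have := hbd n
              nlinarith [pow_nonneg hs.le n]
          _ = s^n * C^n * n.factorial := by ring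
      calc |dd| ≤ |(∫ ω, Real.exp (-s * X ω) ∂P)
              - ∑ k ∈ Finset.range n, (-s)^k * μ k / k.factorial|
            + |(∫ ω', Real.exp (-s * Y ω') ∂Q)
              - ∑ k ∈ Finset.range n, (-s)^k * μ k / k.factorial| := by
            rw [hdd, show (∫ ω, Real.exp (-s * X ω) ∂P) - ∫ ω', Real.exp (-s * Y ω') ∂Q
              = ((∫ ω, Real.exp (-s * X ω) ∂P)
                  - ∑ k ∈ Finset.range n, (-s)^k * μ k / k.factorial)
                - ((∫ ω', Real.exp (-s * Y ω') ∂Q)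
                  - ∑ k ∈ Finset.range n, (-s)^k * μ k / k.factorial) by ring]
            exact abs_sub _ _
        _ ≤ (s*C)^n + (s*C)^n := add_le_add (bX.trans hub) (bY.trans hub)
        _ = 2*(s*C)^n := by ring
    have hterm : Tendsto (fun n : ℕ => 2*(s*C)^n) atTop (𝓝 0) := by
      have h0 : Tendsto (fun n : ℕ => (s*C)^n) atTop (𝓝 0) :=
        tendsto_pow_atTop_nhds_zero_of_lt_one (by positivity) hsC
      simpa using h0.const_mul 2
    have habs : |dd| ≤ 0 := ge_of_tendsto hterm (Eventually.of_forall hstep)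
    have : dd = 0 := abs_eq_zero.1 (le_antisymm habs (abs_nonneg _))
    rw [hdd] at this
    linarith
  -- Step 2 : Laplace transforms agree for all positive s
  have hall : ∀ s : ℝ, 0 < s →
      (∫ ω, Real.exp (-s * X ω) ∂P) = ∫ ω', Real.exp (-s * Y ω') ∂Q := by
    have hAX := laplace_analyticOnNhd P hXm hXpos
    have hAY := laplace_analyticOnNhd Q hYm hYpos
    have hrealX : ∀ s : ℝ, (∫ ω, Complex.exp (-(s:ℂ) * (X ω : ℂ)) ∂P)
        = ((∫ ω, Real.exp (-s * X ω) ∂P : ℝ) : ℂ) := by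
      intro s
      have hfun : (fun ω => Complex.exp (-(s:ℂ) * (X ω : ℂ)))
          = fun ω => ((Real.exp (-s * X ω) : ℝ) : ℂ) := by
        funext ω
        rw [Complex.ofReal_exp]
        congr 1
        push_cast
        ring
      rw [hfun]
      exact integral_ofReal
    have hrealY : ∀ s : ℝ, (∫ ω', Complex.exp (-(s:ℂ) * (Y ω' : ℂ)) ∂Q)
        = ((∫ ω', Real.exp (-s * Y ω') ∂Q : ℝ) : ℂ) := by
      intro s
      have hfun : (fun ω' => Complex.exp (-(s:ℂ) * (Y ω' : ℂ)))
          = fun ω' => ((Real.exp (-s * Y ω') : ℝ) : ℂ) := by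
        funext ω'
        rw [Complex.ofReal_exp]
        congr 1
        push_cast
        ring
      rw [hfun]
      exact integral_ofReal
    set c0 : ℝ := 1/(2*C) with hc0
    have hc0pos : 0 < c0 := by positivity
    have hU : IsPreconnected {z : ℂ | 0 < z.re} :=
      (convex_halfSpace_re_gt 0).isPreconnected
    have hx0 : ((c0:ℂ)) ∈ {z : ℂ | 0 < z.re} := by
      simp [Complex.ofReal_re, hc0pos]
    have hfreq : ∃ᶠ z in nhdsWithin (c0:ℂ) {(c0:ℂ)}ᶜ,
        (∫ ω, Complex.exp (-z * (X ω : ℂ)) ∂P) = ∫ ω', Complex.exp (-z * (Y ω' : ℂ)) ∂Q := by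
      have hseq : Tendsto (fun n : ℕ => ((c0 + c0/2 * (1/(n+1)) : ℝ) : ℂ)) atTop
          (nhdsWithin (c0:ℂ) {(c0:ℂ)}ᶜ) := by
        rw [tendsto_nhdsWithin_iff]
        constructor
        · apply (Complex.continuous_ofReal.tendsto c0).comp
          have h1 : Tendsto (fun n : ℕ => (1:ℝ)/(n+1)) atTop (𝓝 0) :=
            tendsto_one_div_add_atTop_nhds_zero_nat
          have h2 := h1.const_mul (c0/2)
          simp only [mul_zero] at h2
          have h3 := h2.const_add c0
          simpa using h3
        · apply Eventually.of_forall
          intro n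
          simp only [mem_compl_iff, mem_singleton_iff]
          intro hcontra
          rw [Complex.ofReal_inj] at hcontra
          have hpos : 0 < c0/2 * (1/((n:ℝ)+1)) := by positivity
          linarith
      apply hseq.frequently
      apply Frequently.of_forall
      intro n
      have hspos : 0 < c0 + c0/2 * (1/((n:ℝ)+1)) := by positivity
      have hsC : (c0 + c0/2 * (1/((n:ℝ)+1))) * C < 1 := by
        have h1 : c0/2 * (1/((n:ℝ)+1)) ≤ c0/2 := by
          have h2 : (1:ℝ)/((n:ℝ)+1) ≤ 1 := by
            rw [div_le_one (by positivity)]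
            simp
          nlinarith
        have h3 : (c0 + c0/2 * (1/((n:ℝ)+1))) ≤ 3/2 * c0 := by linarith
        calc (c0 + c0/2 * (1/((n:ℝ)+1))) * C ≤ 3/2 * c0 * C := by nlinarith
          _ = 3/4 := by rw [hc0]; field_simp; ring
          _ < 1 := by norm_num
      beta_reduce
      rw [hrealX, hrealY, hsmall _ hspos hsC]
    have heq := hAX.eqOn_of_preconnected_of_frequently_eq hAY hU hx0 hfreq
    intro s hs
    have hsU : ((s:ℂ)) ∈ {z : ℂ | 0 < z.re} := by simp [Complex.ofReal_re, hs]
    have := heq hsU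
    beta_reduce at this
    rw [hrealX, hrealY] at this
    exact_mod_cast this
  -- Step 3 : Stone-Weierstrass via pushforward by exp(-·)
  have hmX : Measurable fun ω => Real.exp (-X ω) := Real.measurable_exp.comp hXm.neg
  have hmY : Measurable fun ω' => Real.exp (-Y ω') := Real.measurable_exp.comp hYm.neg
  set α := Measure.map (fun ω => Real.exp (-X ω)) P with hα
  set β := Measure.map (fun ω' => Real.exp (-Y ω')) Q with hβ
  haveI hPα : IsProbabilityMeasure α := Measure.isProbabilityMeasure_map hmX.aemeasurable
  haveI hPβ : IsProbabilityMeasure β := Measure.isProbabilityMeasure_map hmY.aemeasurable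
  have hαIcc : ∀ᵐ u ∂α, u ∈ Icc (0:ℝ) 1 := by
    rw [hα]
    refine (ae_map_iff hmX.aemeasurable measurableSet_Icc).mpr ?_
    filter_upwards [hXpos] with ω hω
    exact ⟨(Real.exp_pos _).le, Real.exp_le_one_iff.2 (by linarith)⟩
  have hβIcc : ∀ᵐ u ∂β, u ∈ Icc (0:ℝ) 1 := by
    rw [hβ]
    refine (ae_map_iff hmY.aemeasurable measurableSet_Icc).mpr ?_
    filter_upwards [hYpos] with ω hω
    exact ⟨(Real.exp_pos _).le, Real.exp_le_one_iff.2 (by linarith)⟩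
  have hIccInt : ∀ (γ : Measure ℝ) (_ : IsProbabilityMeasure γ),
      (∀ᵐ u ∂γ, u ∈ Icc (0:ℝ) 1) → ∀ g : ℝ → ℝ, Measurable g →
        (∀ u ∈ Icc (0:ℝ) 1, |g u| ≤ 1) → Integrable g γ := by
    intro γ hγ hIcc g hg hgle
    refine Integrable.mono' (integrable_const 1) hg.aestronglyMeasurable ?_
    filter_upwards [hIcc] with u hu
    rw [Real.norm_eq_abs]
    exact hgle u hu
  -- moments of the pushforwards coincide
  have hmomαβ : ∀ k : ℕ, ∫ u, u^k ∂α = ∫ u, u^k ∂β := by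
    intro k
    have hroundX : ∫ u, u^k ∂α = ∫ ω, Real.exp (-X ω)^k ∂P := by
      rw [hα, integral_map hmX.aemeasurable (show Measurable fun u : ℝ => u ^ k from measurable_id.pow_const k).aestronglyMeasurable]
    have hroundY : ∫ u, u^k ∂β = ∫ ω', Real.exp (-Y ω')^k ∂Q := by
      rw [hβ, integral_map hmY.aemeasurable (show Measurable fun u : ℝ => u ^ k from measurable_id.pow_const k).aestronglyMeasurable]
    rw [hroundX, hroundY]
    rcases Nat.eq_zero_or_pos k with hk | hk
    · simp [hk]
    · have hkpos : (0:ℝ) < k := by exact_mod_cast hk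
      have hXe : ∀ ω, Real.exp (-X ω)^k = Real.exp (-(k:ℝ) * X ω) := by
        intro ω
        rw [← Real.exp_nat_mul]
        congr 1
        ring
      have hYe : ∀ ω', Real.exp (-Y ω')^k = Real.exp (-(k:ℝ) * Y ω') := by
        intro ω'
        rw [← Real.exp_nat_mul]
        congr 1
        ring
      simp only [hXe, hYe]
      exact hall (k:ℝ) hkpos
  -- polynomial integrals coincide
  have hpoly : ∀ p : Polynomial ℝ, ∫ u, p.eval u ∂α = ∫ u, p.eval u ∂β := by
    intro p
    have hpe : ∀ u : ℝ, p.eval u = ∑ i ∈ Finset.range (p.natDegree + 1), p.coeff i * u^i :=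
      fun u => Polynomial.eval_eq_sum_range u
    have hintk : ∀ (γ : Measure ℝ) (hγ : IsProbabilityMeasure γ),
        (∀ᵐ u ∂γ, u ∈ Icc (0:ℝ) 1) →
        ∀ i : ℕ, Integrable (fun u => p.coeff i * u^i) γ := by
      intro γ hγ hIcc i
      refine ((hIccInt γ hγ hIcc (fun u => u^i) (show Measurable fun u : ℝ => u ^ i from measurable_id.pow_const i) ?_).const_mul _)
      intro u hu
      rw [abs_pow]
      apply pow_le_one₀ (abs_nonneg _)
      rw [abs_le]
      exact ⟨by linarith [hu.1], hu.2⟩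
    simp only [hpe]
    rw [integral_finset_sum _ (fun i _ => hintk α hPα hαIcc i),
      integral_finset_sum _ (fun i _ => hintk β hPβ hβIcc i)]
    apply Finset.sum_congr rfl
    intro i _
    rw [MeasureTheory.integral_const_mul, MeasureTheory.integral_const_mul, hmomαβ i]
  -- continuous integrals coincide
  have hcont : ∀ g : ℝ → ℝ, Continuous g → ∫ u, g u ∂α = ∫ u, g u ∂β := by
    intro g hgc
    by_contra hne
    set d := |(∫ u, g u ∂α) - ∫ u, g u ∂β| with hd
    have hdpos : 0 < d := by
      rw [hd]
      rcases lt_or_gt_of_ne (sub_ne_zero.2 hne) with h | h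
      · rw [abs_of_neg h]; linarith
      · rw [abs_of_pos h]; linarith
    obtain ⟨p, hp⟩ := exists_polynomial_near_of_continuousOn 0 1 g hgc.continuousOn (d/4)
      (by positivity)
    -- bounds for integrability
    obtain ⟨Mg, hMg⟩ := (isCompact_Icc (a := (0:ℝ)) (b := 1)).exists_bound_of_continuousOn
      hgc.continuousOn
    have hgint : ∀ (γ : Measure ℝ) (hγ : IsProbabilityMeasure γ),
        (∀ᵐ u ∂γ, u ∈ Icc (0:ℝ) 1) → Integrable g γ := by
      intro γ hγ hIcc
      refine Integrable.mono' (integrable_const Mg) hgc.measurable.aestronglyMeasurable ?_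
      filter_upwards [hIcc] with u hu
      exact hMg u hu
    obtain ⟨Mp, hMp⟩ := (isCompact_Icc (a := (0:ℝ)) (b := 1)).exists_bound_of_continuousOn
      p.continuous.continuousOn
    have hpint : ∀ (γ : Measure ℝ) (hγ : IsProbabilityMeasure γ),
        (∀ᵐ u ∂γ, u ∈ Icc (0:ℝ) 1) → Integrable (fun u => p.eval u) γ := by
      intro γ hγ hIcc
      refine Integrable.mono' (integrable_const Mp) p.continuous.measurable.aestronglyMeasurable ?_
      filter_upwards [hIcc] with u hu
      exact hMp u hu
    have hclose : ∀ (γ : Measure ℝ) (hγ : IsProbabilityMeasure γ),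
        (∀ᵐ u ∂γ, u ∈ Icc (0:ℝ) 1) →
        |(∫ u, g u ∂γ) - ∫ u, p.eval u ∂γ| ≤ d/4 := by
      intro γ hγ hIcc
      rw [← integral_sub (hgint γ hγ hIcc) (hpint γ hγ hIcc)]
      have hb := norm_integral_le_of_norm_le (μ := γ)
        (f := fun u => g u - p.eval u) (g := fun _ => d/4) (integrable_const _) ?_
      · rw [Real.norm_eq_abs] at hb
        calc |∫ u, (g u - p.eval u) ∂γ| ≤ ∫ _, d/4 ∂γ := hb
          _ = d/4 := by simp [measure_univ]
      · filter_upwards [hIcc] with u hu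
        rw [Real.norm_eq_abs, abs_sub_comm]
        exact (hp u hu).le
    have h1 := hclose α hPα hαIcc
    have h2 := hclose β hPβ hβIcc
    have h3 := hpoly p
    have : d ≤ d/4 + d/4 := by
      calc d = |((∫ u, g u ∂α) - ∫ u, p.eval u ∂α)
            - ((∫ u, g u ∂β) - ∫ u, p.eval u ∂β)| := by rw [hd]; congr 1; rw [h3]; ring
        _ ≤ |(∫ u, g u ∂α) - ∫ u, p.eval u ∂α| + |(∫ u, g u ∂β) - ∫ u, p.eval u ∂β| :=
            abs_sub _ _
        _ ≤ d/4 + d/4 := add_le_add h1 h2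
    linarith
  -- conclude α = β
  have hαβ : α = β := by
    apply ext_of_forall_lintegral_eq_of_IsFiniteMeasure
    intro f
    have hfc : Continuous fun x : ℝ => ((f x : NNReal) : ℝ) :=
      NNReal.continuous_coe.comp f.continuous
    obtain ⟨Cf, hCf⟩ := f.bounded
    have hfb : ∀ x : ℝ, ((f x : NNReal) : ℝ) ≤ Cf + ((f 0 : NNReal) : ℝ) := by
      intro x
      have := hCf x 0
      rw [NNReal.dist_eq] at this
      have h4 := abs_sub_abs_le_abs_sub ((f x : NNReal) : ℝ) ((f 0 : NNReal) : ℝ)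
      rw [abs_of_nonneg (f x).coe_nonneg, abs_of_nonneg (f 0).coe_nonneg] at h4
      linarith
    have hint : ∀ (γ : Measure ℝ) (hγ : IsProbabilityMeasure γ),
        Integrable (fun x => ((f x : NNReal) : ℝ)) γ := by
      intro γ hγ
      refine Integrable.mono' (integrable_const (Cf + ((f 0 : NNReal) : ℝ)))
        hfc.measurable.aestronglyMeasurable ?_
      apply Eventually.of_forall
      intro x
      rw [Real.norm_eq_abs, abs_of_nonneg (f x).coe_nonneg]
      exact hfb x
    rw [lintegral_coe_eq_integral _ (hint α hPα), lintegral_coe_eq_integral _ (hint β hPβ),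
      hcont _ hfc]
  -- pull back through -log
  have hlog : Measurable fun u : ℝ => -Real.log u := Real.measurable_log.neg
  have hXr : Measure.map X P = Measure.map (fun u => -Real.log u) α := by
    rw [hα, Measure.map_map hlog hmX]
    congr 1
    funext ω
    simp [Function.comp, Real.log_exp]
  have hYr : Measure.map Y Q = Measure.map (fun u => -Real.log u) β := by
    rw [hβ, Measure.map_map hlog hmY]
    congr 1
    funext ω'
    simp [Function.comp, Real.log_exp]
  rw [hXr, hYr, hαβ]

/-- mellinT at 1 equals 1. -/
private lemma mellinT_one {Ω : Type*} [MeasurableSpace Ω] (P : Measure Ω)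
    [IsProbabilityMeasure P] (X : Ω → ℝ) : mellinT P X 1 = 1 := by
  have : ∀ ω, X ω ^ ((1:ℝ) - 1) = 1 := fun ω => by
    rw [sub_self, Real.rpow_zero]
  simp only [mellinT, this]
  simp [measure_univ]

/-- mellinT at n+1 is the n-th moment. -/
private lemma mellinT_nat {Ω : Type*} [MeasurableSpace Ω] (P : Measure Ω)
    (X : Ω → ℝ) (n : ℕ) : mellinT P X ((n:ℝ)+1) = ∫ ω, X ω ^ n ∂P := by
  have : ∀ ω, X ω ^ (((n:ℝ)+1) - 1) = X ω ^ n := fun ω => by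
    rw [show ((n:ℝ)+1) - 1 = (n:ℝ) by ring, Real.rpow_natCast]
  simp only [mellinT, this]

/-- products over range of (k+1) equal factorial. -/
private lemma prod_range_factorial (n : ℕ) :
    (∏ k ∈ Finset.range n, ((k:ℝ)+1)) = n.factorial := by
  induction n with
  | zero => simp
  | succ n ih =>
    rw [Finset.prod_range_succ, ih, Nat.factorial_succ]
    push_cast
    ring

/-- A generic pair-conclusion lemma. -/
private lemma pair_law {Ω : Type*} [MeasurableSpace Ω] {Ω' : Type*} [MeasurableSpace Ω']
    (P : Measure Ω) (Q : Measure Ω') [IsProbabilityMeasure P] [IsProbabilityMeasure Q]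
    {X : Ω → ℝ} {Y : Ω' → ℝ} (hXm : Measurable X) (hYm : Measurable Y)
    (hXpos : ∀ᵐ ω ∂P, 0 < X ω) (hYpos : ∀ᵐ ω ∂Q, 0 < Y ω)
    (c : ℝ → ℝ) (hcpos : ∀ r > (0:ℝ), 0 < c r)
    (C : ℝ) (hC : 0 < C) (hclin : ∀ s : ℝ, 1 ≤ s → c s ≤ C * s)
    (hXrec : ∀ r > (0:ℝ), mellinT P X (r + 1) = c r * mellinT P X r)
    (hYrec : ∀ r > (0:ℝ), mellinT Q Y (r + 1) = c r * mellinT Q Y r) :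
    Measure.map X P = Measure.map Y Q := by
  set μ : ℕ → ℝ := fun n => ∏ k ∈ Finset.range n, c ((k:ℝ)+1) with hμ
  have hμpos : ∀ n, 0 < μ n := by
    intro n
    apply Finset.prod_pos
    intro k _
    exact hcpos _ (by positivity)
  have hXval : ∀ n : ℕ, mellinT P X ((n:ℝ)+1) = μ n :=
    mellin_int_values (mellinT_one P X) hXrec
  have hYval : ∀ n : ℕ, mellinT Q Y ((n:ℝ)+1) = μ n :=
    mellin_int_values (mellinT_one Q Y) hYrec
  have hXmom : ∀ n : ℕ, ∫ ω, X ω ^ n ∂P = μ n := fun n => by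
    rw [← mellinT_nat]; exact hXval n
  have hYmom : ∀ n : ℕ, ∫ ω', Y ω' ^ n ∂Q = μ n := fun n => by
    rw [← mellinT_nat]; exact hYval n
  have hXint : ∀ n : ℕ, Integrable (fun ω => X ω ^ n) P := by
    intro n
    by_contra h
    have h0 := integral_undef h
    have h1 := hXmom n
    rw [h0] at h1
    exact absurd h1.symm (ne_of_gt (hμpos n))
  have hYint : ∀ n : ℕ, Integrable (fun ω' => Y ω' ^ n) Q := by
    intro n
    by_contra h
    have h0 := integral_undef h
    have h1 := hYmom n
    rw [h0] at h1
    exact absurd h1.symm (ne_of_gt (hμpos n))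
  have hbd : ∀ n : ℕ, μ n ≤ n.factorial * C ^ n := by
    intro n
    calc μ n ≤ ∏ k ∈ Finset.range n, (C * ((k:ℝ)+1)) := by
          apply Finset.prod_le_prod
          · intro k _
            exact (hcpos _ (by positivity)).le
          · intro k _
            exact hclin _ (le_add_of_nonneg_left k.cast_nonneg)
      _ = n.factorial * C ^ n := by
          rw [Finset.prod_mul_distrib, Finset.prod_const, Finset.card_range,
            prod_range_factorial]
          ring
  exact map_eq_of_moments P Q hXm hYm hXpos hYpos μ C hC hXint hYint hXmom hYmom hbd


end SymmetryAux

/-- The symmetry case: if `Φ` and `Φ*(s) = s/Φ(s)` are conjugate Bernstein functions,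
then `I_Φ =law= R_{Φ*}` and `R_Φ =law= I_{Φ*}`. The perpetuity (resp. remainder)
associated to a Bernstein function `Ψ` is characterized as the positive random variable
whose Mellin transform is the unique log-convex function equal to `1` at `1` and
satisfying `g(r+1) = (r/Ψ(r)) g(r)` (resp. `f(r+1) = Ψ(r) f(r)`). -/
theorem symmetry_perpetuity_remainder_law
    (Φ Φs : ℝ → ℝ) (hΦ : IsBernstein Φ) (hΦne : ∃ s > (0 : ℝ), Φ s ≠ 0)
    (hΦs : IsBernstein Φs) (hstar : ∀ s > (0 : ℝ), Φs s = s / Φ s)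
    {Ω : Type*} [MeasurableSpace Ω] (P : Measure Ω) [IsProbabilityMeasure P]
    {Ω' : Type*} [MeasurableSpace Ω'] (Q : Measure Ω') [IsProbabilityMeasure Q]
    (IΦ RΦ : Ω → ℝ) (IΦs RΦs : Ω' → ℝ)
    (hIΦm : Measurable IΦ) (hRΦm : Measurable RΦ)
    (hIΦsm : Measurable IΦs) (hRΦsm : Measurable RΦs)
    (hIΦpos : ∀ᵐ ω ∂P, 0 < IΦ ω) (hRΦpos : ∀ᵐ ω ∂P, 0 < RΦ ω)
    (hIΦspos : ∀ᵐ ω ∂Q, 0 < IΦs ω) (hRΦspos : ∀ᵐ ω ∂Q, 0 < RΦs ω)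
    -- Mellin characterization of the perpetuity associated to Φ
    (hIΦeq : ∀ r > (0 : ℝ), mellinT P IΦ (r + 1) = (r / Φ r) * mellinT P IΦ r)
    (hIΦconv : ConvexOn ℝ (Ioi 0) (fun r => Real.log (mellinT P IΦ r)))
    -- Mellin characterization of the remainder associated to Φ
    (hRΦeq : ∀ r > (0 : ℝ), mellinT P RΦ (r + 1) = Φ r * mellinT P RΦ r)
    (hRΦconv : ConvexOn ℝ (Ioi 0) (fun r => Real.log (mellinT P RΦ r)))
    -- Mellin characterization of the perpetuity associated to Φ*
    (hIΦseq : ∀ r > (0 : ℝ), mellinT Q IΦs (r + 1) = (r / Φs r) * mellinT Q IΦs r)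
    (hIΦsconv : ConvexOn ℝ (Ioi 0) (fun r => Real.log (mellinT Q IΦs r)))
    -- Mellin characterization of the remainder associated to Φ*
    (hRΦseq : ∀ r > (0 : ℝ), mellinT Q RΦs (r + 1) = Φs r * mellinT Q RΦs r)
    (hRΦsconv : ConvexOn ℝ (Ioi 0) (fun r => Real.log (mellinT Q RΦs r))) :
    Measure.map IΦ P = Measure.map RΦs Q ∧ Measure.map RΦ P = Measure.map IΦs Q := by
  have hΦpos : ∀ r > (0:ℝ), 0 < Φ r := fun r hr => bern_pos hΦ hΦne hr
  have hΦspos : ∀ r > (0:ℝ), 0 < Φs r := fun r hr => by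
    rw [hstar r hr]; exact div_pos hr (hΦpos r hr)
  obtain ⟨C1, hC1, hlin1⟩ := bern_lin hΦs
  obtain ⟨C2, hC2, hlin2⟩ := bern_lin hΦ
  constructor
  · apply pair_law P Q hIΦm hRΦsm hIΦpos hRΦspos Φs (fun r hr => hΦspos r hr) C1 hC1 hlin1
    · intro r hr
      rw [hIΦeq r hr, hstar r hr]
    · exact hRΦseq
  · apply pair_law P Q hRΦm hIΦsm hRΦpos hIΦspos Φ (fun r hr => hΦpos r hr) C2 hC2 hlin2
    · exact hRΦeq
    · intro r hr
      have hne1 : r ≠ 0 := ne_of_gt hr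
      have hne2 : Φ r ≠ 0 := ne_of_gt (hΦpos r hr)
      have hd : r / Φs r = Φ r := by
        rw [hstar r hr]
        field_simp
      rw [hIΦseq r hr, hd]
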